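/- Let x and y be distinct nodes in an ADMG G. There exist a node z and a set W such that ({z},W) is a valid conditional instrumental set relative to (x,y) in G if and only if there exist a node z' and a set W' ⊆ an_{G̃}({y, z'}) such that ({z'},W') is a valid conditional instrumental set relative to (x,y) in G. -/

import Mathlib

/-- Edge type of a step on a walk in a mixed graph, relative to the direction of travel:
`fwd` is a directed edge pointing forward, `back` a directed edge pointing backward,
`bi` a bidirected edge. -/
inductive EdgeDir : Type
  | fwd
  | back
  | bi
  deriving DecidableEq

/-- The edge has an arrowhead at its second endpoint. -/
def EdgeDir.arrowSnd : EdgeDir → Prop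
  | .fwd => True
  | .back => False
  | .bi => True

/-- The edge has an arrowhead at its first endpoint. -/
def EdgeDir.arrowFst : EdgeDir → Prop
  | .fwd => False
  | .back => True
  | .bi => True

/-- The common node between consecutive walk edges `e₁, e₂` is a collider:
both edges have an arrowhead at it. -/
def IsColliderPair (e₁ e₂ : EdgeDir) : Prop := e₁.arrowSnd ∧ e₂.arrowFst

/-- A mixed graph: a set of directed edges and a set of bidirected edges on node type `V`. -/
structure MixedGraph (V : Type) where
  dir : V → V → Prop
  bidir : V → V → Prop

namespace MixedGraph

variable {V : Type}

/-- `G` is an acyclic directed mixed graph: the bidirected edges are symmetric and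
the directed edges contain no directed cycle. -/
def IsADMG (G : MixedGraph V) : Prop :=
  (∀ a b, G.bidir a b → G.bidir b a) ∧ ∀ v, ¬ Relation.TransGen G.dir v v

/-- There is an edge of type `e` between `a` and `b` (in this travel direction). -/
def IsEdge (G : MixedGraph V) : EdgeDir → V → V → Prop
  | .fwd, a, b => G.dir a b
  | .back, a, b => G.dir b a
  | .bi, a, b => G.bidir a b

/-- Walks in a mixed graph. -/
inductive Walk (G : MixedGraph V) : V → V → Type
  | nil (v : V) : Walk G v v
  | cons {a b c : V} (e : EdgeDir) (hab : G.IsEdge e a b) (w : Walk G b c) : Walk G a c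

namespace Walk

variable {G : MixedGraph V}

/-- The list of nodes of a walk, in order (with multiplicity). -/
def support : {a b : V} → G.Walk a b → List V
  | a, _, .nil _ => [a]
  | a, _, .cons _ _ w => a :: w.support

/-- The list of edge types along a walk. -/
def edges : {a b : V} → G.Walk a b → List EdgeDir
  | _, _, .nil _ => []
  | _, _, .cons e _ w => e :: w.edges

/-- All edges of the walk are directed and point toward the end of the walk. -/
def AllFwd : {a b : V} → G.Walk a b → Prop
  | _, _, .nil _ => True
  | _, _, .cons e _ w => e = EdgeDir.fwd ∧ w.AllFwd

/-- Auxiliary predicate: the current node `b` was reached via an edge of type `e₁` and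
the walk continues with `w`; every interior node from `b` onward that is a collider is in `W`
and every interior node from `b` onward that is a non-collider is not in `W`. -/
def openFrom (W : Set V) : EdgeDir → (b : V) → {c : V} → G.Walk b c → Prop
  | _, _, _, .nil _ => True
  | e₁, b, _, @Walk.cons _ _ _ m _ e₂ _ w =>
      (IsColliderPair e₁ e₂ → b ∈ W) ∧ (¬ IsColliderPair e₁ e₂ → b ∉ W) ∧
      openFrom W e₂ m w

/-- A walk is open given `W` if every collider on it lies in `W` and no non-collider
on it lies in `W`. -/
def IsOpen {a b : V} (W : Set V) (w : G.Walk a b) : Prop :=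
  match w with
  | .nil _ => True
  | @Walk.cons _ _ _ m _ e _ w' => openFrom W e m w'

/-- The walk ends with a segment of the form `x → ⋯ → end`: it has a final subwalk that
starts at `x` and consists solely of directed edges pointing toward the end of the walk. -/
def EndsWithDirFrom (x : V) : {a b : V} → G.Walk a b → Prop
  | a, _, .nil _ => a = x
  | a, _, .cons e _ w => (a = x ∧ e = EdgeDir.fwd ∧ w.AllFwd) ∨ w.EndsWithDirFrom x

/-- The first edge of the walk has an arrowhead at the start node. -/
def firstArrowIn : {a b : V} → G.Walk a b → Prop
  | _, _, .nil _ => False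
  | _, _, .cons e _ _ => e.arrowFst

/-- The last edge of the walk has an arrowhead at the end node. -/
def lastArrowIn : {a b : V} → G.Walk a b → Prop
  | _, _, .nil _ => False
  | _, _, .cons e _ (.nil _) => e.arrowSnd
  | _, _, .cons _ _ (.cons e h w) => lastArrowIn (.cons e h w)

/-- For each interior node of the walk, the pair of edges incident to it on the walk,
together with the node itself. -/
def colliderTriples {a b : V} (w : G.Walk a b) : List (EdgeDir × EdgeDir × V) :=
  w.edges.zip (w.edges.tail.zip w.support.tail)

end Walk

/-- `X` and `Z` are d-connected given `C`: some walk from a node of `X` to a node of `Z`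
is open given `C`. -/
def dConn (G : MixedGraph V) (X Z C : Set V) : Prop :=
  ∃ x ∈ X, ∃ z ∈ Z, ∃ w : G.Walk x z, w.IsOpen C

/-- The descendants of `x` (including `x` itself). -/
def desc (G : MixedGraph V) (x : V) : Set V := {v | Relation.ReflTransGen G.dir x v}

/-- The descendants of a set of nodes. -/
def descSet (G : MixedGraph V) (S : Set V) : Set V :=
  {v | ∃ s ∈ S, Relation.ReflTransGen G.dir s v}

/-- The ancestors of a set of nodes (including the set itself). -/
def anc (G : MixedGraph V) (S : Set V) : Set V :=
  {v | ∃ s ∈ S, Relation.ReflTransGen G.dir v s}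

/-- The parents of a set of nodes. -/
def pa (G : MixedGraph V) (S : Set V) : Set V := {p | ∃ s ∈ S, G.dir p s}

/-- `causal_G(x,y)`: the nodes `v ≠ x` lying on a proper directed path from `x` to `y`. -/
def causal (G : MixedGraph V) (x y : V) : Set V :=
  {v | v ≠ x ∧ ∃ w : G.Walk x y, w.AllFwd ∧ w.support.Nodup ∧ v ∈ w.support}

/-- The forbidden nodes `forb_G(x,y) = de_G(causal_G(x,y)) ∪ {x}`. -/
def forb (G : MixedGraph V) (x y : V) : Set V := G.descSet (G.causal x y) ∪ {x}

/-- `G̃`: the graph `G` with every directed edge from `x` to a node of `causal_G(x,y)` removed. -/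
def tilde (G : MixedGraph V) (x y : V) : MixedGraph V where
  dir a b := G.dir a b ∧ ¬(a = x ∧ b ∈ G.causal x y)
  bidir := G.bidir

/-- `(Z, W)` is a valid conditional instrumental set relative to `(x, y)` in `G`
(the graphical criterion of Henckel et al., taken as the definition): the sets
`{x,y}`, `Z`, `W` are pairwise disjoint, `(Z ∪ W) ∩ forb_G(x,y) = ∅`, `x ⊄⊥_G Z | W`,
and `y ⊥_G̃ Z | W`. -/
def ValidCIS (G : MixedGraph V) (x y : V) (Z W : Set V) : Prop :=
  x ≠ y ∧ x ∉ Z ∧ x ∉ W ∧ y ∉ Z ∧ y ∉ W ∧ Disjoint Z W ∧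
  (Z ∪ W) ∩ G.forb x y = ∅ ∧
  G.dConn {x} Z W ∧
  ¬ (G.tilde x y).dConn {y} Z W

/-- `W` is a nearest separator with respect to `(y, z, R)` in `H` (with ambient node `x`). -/
def NearestSep (H : MixedGraph V) (x y z : V) (R : Set V) (W : Set V) : Prop :=
  W ⊆ R ∩ H.anc {y, z} ∧
  ¬ H.dConn {y} {z} W ∧
  ∀ w ∈ W, ∀ W' ⊆ (R ∩ H.anc {y, z}) \ {x, y, w},
    H.dConn {w} {z} W' → H.dConn {y} {z} W'

/-- `dis_{G,W}(u)`: the nodes connected to `u` via a path of bidirected edges with no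
node in `W` (with `u ∈ dis_{G,W}(u)`). -/
def dis (G : MixedGraph V) (W : Set V) (u : V) : Set V :=
  {v | Relation.ReflTransGen (fun a b => G.bidir a b ∧ a ∉ W ∧ b ∉ W) u v}

/-- `dis⁺_{G,W}(u) = (dis_{G,W}(u) ∪ pa_G(dis_{G,W}(u))) ∖ W`. -/
def disPlus (G : MixedGraph V) (W : Set V) (u : V) : Set V :=
  (G.dis W u ∪ G.pa (G.dis W u)) \ W

/-- `W^opt` of Henckel et al. -/
def Wopt (G : MixedGraph V) (x y : V) : Set V := G.disPlus {x} y \ {x, y}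

/-- `Z^opt` of Henckel et al. -/
def Zopt (G : MixedGraph V) (x y : V) : Set V :=
  G.disPlus {y} x \ (G.Wopt x y ∪ {x, y})

/-- The latent projection of `G` over the latent nodes `L`: a directed edge exactly when
`G` has a directed path whose non-endpoint nodes lie in `L`, and a bidirected edge exactly
when `G` has a path whose non-endpoint nodes are non-colliders lying in `L` and whose first
and last edges have an arrowhead at the respective endpoint. -/
def latentProj (G : MixedGraph V) (L : Set V) : MixedGraph V where
  dir a b := a ∉ L ∧ b ∉ L ∧ ∃ w : G.Walk a b,
    w.edges ≠ [] ∧ w.AllFwd ∧ w.support.Nodup ∧ ∀ v ∈ w.support.tail.dropLast, v ∈ L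
  bidir a b := a ∉ L ∧ b ∉ L ∧ ∃ w : G.Walk a b,
    w.support.Nodup ∧ w.firstArrowIn ∧ w.lastArrowIn ∧
    (∀ v ∈ w.support.tail.dropLast, v ∈ L) ∧
    ∀ t ∈ w.colliderTriples, ¬ IsColliderPair t.1 t.2.1

end MixedGraph

/-- The moralization of a DAG with edge relation `E` contains the (undirected) edge
`a − b` (for `a ≠ b`) exactly when `E a b`, or `E b a`, or `a` and `b` have a common child. -/
def MoralEdge {α : Type} (E : α → α → Prop) (a b : α) : Prop :=
  a ≠ b ∧ (E a b ∨ E b a ∨ ∃ c, E a c ∧ E b c)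

namespace MixedGraph

variable {V : Type}

namespace Walk

variable {G : MixedGraph V}

/-- The last edge type of a walk, with default `d` for the empty walk. -/
def lastD : {a b : V} → G.Walk a b → EdgeDir → EdgeDir
  | _, _, .nil _, d => d
  | _, _, .cons e _ w, _ => w.lastD e

/-- The first edge type of a walk, if any. -/
def headE : {a b : V} → G.Walk a b → Option EdgeDir
  | _, _, .nil _ => none
  | _, _, .cons e _ _ => some e

/-- The interior nodes of a walk. -/
def intSup {a b : V} (w : G.Walk a b) : List V := w.support.tail.dropLast

@[simp] lemma support_nil (v : V) : (Walk.nil v : G.Walk v v).support = [v] := rfl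

@[simp] lemma support_cons {a b c : V} (e : EdgeDir) (h : G.IsEdge e a b) (w : G.Walk b c) :
    (Walk.cons e h w).support = a :: w.support := rfl

lemma support_ne_nil : ∀ {a b : V} (w : G.Walk a b), w.support ≠ []
  | _, _, .nil _ => by simp
  | _, _, .cons _ _ _ => by simp

lemma start_mem_support : ∀ {a b : V} (w : G.Walk a b), a ∈ w.support
  | _, _, .nil _ => by simp
  | _, _, .cons _ _ _ => by simp

lemma end_mem_support : ∀ {a b : V} (w : G.Walk a b), b ∈ w.support
  | _, _, .nil _ => by simp
  | _, _, .cons _ _ w => by simpa using Or.inr (end_mem_support w)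

@[simp] lemma intSup_nil (v : V) : (Walk.nil v : G.Walk v v).intSup = [] := rfl

@[simp] lemma intSup_cons_nil {a m : V} (e : EdgeDir) (h : G.IsEdge e a m) :
    (Walk.cons e h (Walk.nil m)).intSup = [] := rfl

lemma intSup_cons_cons {a m m' c : V} (e : EdgeDir) (h : G.IsEdge e a m)
    (e' : EdgeDir) (h' : G.IsEdge e' m m') (w : G.Walk m' c) :
    (Walk.cons e h (Walk.cons e' h' w)).intSup = m :: (Walk.cons e' h' w).intSup := by
  obtain ⟨u, l, hul⟩ := List.exists_cons_of_ne_nil (support_ne_nil w)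
  simp [intSup, hul]

lemma mem_support_of_mem_intSup {a b : V} {w : G.Walk a b} {v : V} (hv : v ∈ w.intSup) :
    v ∈ w.support :=
  List.tail_subset _ (List.dropLast_subset _ hv)

lemma mem_support_decomp : ∀ {a b : V} (w : G.Walk a b) (v : V), v ∈ w.support →
    v = a ∨ v = b ∨ v ∈ w.intSup
  | _, _, .nil _, v, hv => by simp at hv; exact Or.inl hv
  | _, _, .cons e h w, v, hv => by
    rcases (by simpa using hv : _ ∨ _) with h1 | h2
    · exact Or.inl h1
    · rcases mem_support_decomp w v h2 with h3 | h3 | h3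
      · subst h3
        cases w with
        | nil => exact Or.inr (Or.inl rfl)
        | cons e' h' w' => rw [intSup_cons_cons]; exact Or.inr (Or.inr (by simp))
      · exact Or.inr (Or.inl h3)
      · cases w with
        | nil => simp at h3
        | cons e' h' w' =>
          rw [intSup_cons_cons]
          exact Or.inr (Or.inr (by simp [h3]))

@[simp] lemma isOpen_nil (v : V) (C : Set V) : (Walk.nil v : G.Walk v v).IsOpen C := trivial

lemma isOpen_cons {a m c : V} (C : Set V) (e : EdgeDir) (h : G.IsEdge e a m) (w : G.Walk m c) :
    (Walk.cons e h w).IsOpen C = openFrom C e m w := rfl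

lemma openFrom_nil (C : Set V) (e : EdgeDir) (b : V) :
    openFrom C e b (Walk.nil b : G.Walk b b) = True := rfl

lemma openFrom_cons (C : Set V) (e₁ : EdgeDir) {b m c : V} (e₂ : EdgeDir)
    (h : G.IsEdge e₂ b m) (w : G.Walk m c) :
    openFrom C e₁ b (Walk.cons e₂ h w) =
      ((IsColliderPair e₁ e₂ → b ∈ C) ∧ (¬ IsColliderPair e₁ e₂ → b ∉ C) ∧
        openFrom C e₂ m w) := rfl

lemma lastArrowIn_eq : ∀ {a m b : V} (e : EdgeDir) (h : G.IsEdge e a m) (w : G.Walk m b),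
    (Walk.cons e h w).lastArrowIn ↔ (w.lastD e).arrowSnd
  | _, _, _, e, h, .nil _ => Iff.rfl
  | _, _, _, e, h, .cons e' h' w => by
    show (Walk.cons e' h' w).lastArrowIn ↔ _
    rw [lastArrowIn_eq e' h' w]; rfl

@[simp] lemma lastArrowIn_nil (v : V) : ¬ (Walk.nil v : G.Walk v v).lastArrowIn := fun h => h

end Walk

end MixedGraph
lemma EdgeDir.eq_back_of_not_arrowSnd {e : EdgeDir} (h : ¬ e.arrowSnd) : e = .back := by
  cases e <;> simp [EdgeDir.arrowSnd] at h ⊢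

lemma EdgeDir.eq_fwd_of_not_arrowFst {e : EdgeDir} (h : ¬ e.arrowFst) : e = .fwd := by
  cases e <;> simp [EdgeDir.arrowFst] at h ⊢

namespace MixedGraph

variable {V : Type} {K : MixedGraph V}

lemma anc_mono {S T : Set V} (h : S ⊆ T) : K.anc S ⊆ K.anc T := by
  rintro v ⟨s, hs, hvs⟩; exact ⟨s, h hs, hvs⟩

lemma mem_anc_self {S : Set V} {s : V} (hs : s ∈ S) : s ∈ K.anc S :=
  ⟨s, hs, Relation.ReflTransGen.refl⟩

lemma anc_trans {S : Set V} {v s : V} (hvs : Relation.ReflTransGen K.dir v s)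
    (hs : s ∈ K.anc S) : v ∈ K.anc S := by
  obtain ⟨t, ht, hst⟩ := hs; exact ⟨t, ht, hvs.trans hst⟩

lemma anc_absorb {S C : Set V} (hC : C ⊆ K.anc S) : K.anc (S ∪ C) ⊆ K.anc S := by
  rintro v ⟨s, hs, hvs⟩
  rcases hs with hs | hs
  · exact ⟨s, hs, hvs⟩
  · exact anc_trans hvs (hC hs)

lemma anc_step {S : Set V} {v p : V} (h : K.dir v p) (hp : p ∈ K.anc S) : v ∈ K.anc S := by
  obtain ⟨s, hs, hps⟩ := hp; exact ⟨s, hs, Relation.ReflTransGen.head h hps⟩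

lemma no_cycle_of_acyclic (hK : ∀ u, ¬ Relation.TransGen K.dir u u) {v p : V}
    (h : K.dir v p) (hp : p ∈ K.anc {v}) : False := by
  obtain ⟨s, hs, hps⟩ := hp
  have hs' : s = v := hs
  subst hs'
  exact hK s (Relation.TransGen.head' h hps)

namespace Walk

/-- Ancestor lemma: every node on an open (from `e₁` through `b`) walk is an ancestor
of an endpoint, the preceding node `a`, or the conditioning set. -/
lemma st_anc (hK : ∀ u, ¬ Relation.TransGen K.dir u u) {C : Set V} :
    ∀ {b c : V} (w : K.Walk b c) {a : V} (e₁ : EdgeDir), K.IsEdge e₁ a b →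
      openFrom C e₁ b w → ∀ v ∈ w.support, v ∈ K.anc ({a, c} ∪ C) := by
  intro b c w
  induction w with
  | nil v =>
    intro a e₁ _ _ u hu
    simp only [support_nil, List.mem_singleton] at hu
    subst hu
    exact mem_anc_self (by simp)
  | @cons b m c e₂ h₂ w ih =>
    intro a e₁ h₁ hof u hu
    rw [openFrom_cons] at hof
    obtain ⟨hcol, hncol, hrest⟩ := hof
    have ihm : ∀ v ∈ w.support, v ∈ K.anc ({b, c} ∪ C) := ih e₂ h₂ hrest
    have hb : b ∈ K.anc ({a, c} ∪ C) := by
      by_cases hcp : IsColliderPair e₁ e₂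
      · exact mem_anc_self (Or.inr (hcol hcp))
      · by_cases h1 : e₁.arrowSnd
        · have h2 : ¬ e₂.arrowFst := fun h2 => hcp ⟨h1, h2⟩
          have he₂ : e₂ = .fwd := EdgeDir.eq_fwd_of_not_arrowFst h2
          subst he₂
          have hdir : K.dir b m := h₂
          obtain ⟨s, hs, hms⟩ := ihm m (start_mem_support w)
          have hs' : (s = b ∨ s = c) ∨ s ∈ C := by
            simpa [Set.mem_insert_iff] using hs
          rcases hs' with (rfl | rfl) | hs'
          · exact absurd (Relation.TransGen.head' hdir hms) (hK s)
          · exact ⟨s, by simp, Relation.ReflTransGen.head hdir hms⟩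
          · exact ⟨s, Or.inr hs', Relation.ReflTransGen.head hdir hms⟩
        · have he₁ : e₁ = .back := EdgeDir.eq_back_of_not_arrowSnd h1
          subst he₁
          have hdir : K.dir b a := h₁
          exact ⟨a, by simp, Relation.ReflTransGen.single hdir⟩
    rw [support_cons] at hu
    rcases List.mem_cons.mp hu with rfl | hu
    · exact hb
    · obtain ⟨s, hs, hus⟩ := ihm u hu
      have hs' : (s = b ∨ s = c) ∨ s ∈ C := by simpa [Set.mem_insert_iff] using hs
      rcases hs' with (rfl | rfl) | hs'
      · exact anc_trans hus hb
      · exact ⟨s, by simp, hus⟩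
      · exact ⟨s, Or.inr hs', hus⟩

lemma isOpen_anc (hK : ∀ u, ¬ Relation.TransGen K.dir u u) {C : Set V} :
    ∀ {a b : V} (w : K.Walk a b), w.IsOpen C → ∀ v ∈ w.support, v ∈ K.anc ({a, b} ∪ C) := by
  intro a b w
  cases w with
  | nil v =>
    intro _ u hu
    simp only [support_nil, List.mem_singleton] at hu
    subst hu
    exact mem_anc_self (by simp)
  | @cons a m b e h w =>
    intro hop u hu
    rw [isOpen_cons] at hop
    rw [support_cons] at hu
    rcases List.mem_cons.mp hu with rfl | hu
    · exact mem_anc_self (by simp)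
    · exact st_anc hK w e h hop u hu

/-- If a nonempty walk does not end with an arrowhead, its endpoint is a parent of a
node on the walk. -/
lemma pen : ∀ {a m b : V} (e : EdgeDir) (h : K.IsEdge e a m) (w : K.Walk m b),
    ¬ (Walk.cons e h w).lastArrowIn → ∃ p ∈ (Walk.cons e h w).support, K.dir b p
  | a, m, _, e, h, .nil _, hla => by
    have he : e = .back := EdgeDir.eq_back_of_not_arrowSnd (fun hs => hla hs)
    subst he
    exact ⟨a, by simp, h⟩
  | a, m, b, e, h, .cons e' h' w, hla => by
    have : ¬ (Walk.cons e' h' w).lastArrowIn := fun hl => hla hl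
    obtain ⟨p, hp, hdir⟩ := pen e' h' w this
    refine ⟨p, ?_, hdir⟩
    simp only [support_cons] at hp ⊢
    exact List.mem_cons_of_mem _ hp

end Walk

end MixedGraph
namespace MixedGraph

variable {V : Type} {K : MixedGraph V}

namespace Walk

lemma lift_aux {C W : Set V} (hCW : C ⊆ W) :
    ∀ {m c : V} (w : K.Walk m c) (e₁ : EdgeDir), openFrom C e₁ m w →
      (∀ u, (u = m ∨ u ∈ w.intSup) → u ∈ W → u ∈ C) → openFrom W e₁ m w := by
  intro m c w
  induction w with
  | nil v => intro e₁ _ _; trivial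
  | @cons m m₂ c e₂ h₂ w₂ ih =>
    intro e₁ hof hyp
    rw [openFrom_cons] at hof ⊢
    obtain ⟨hc, hnc, hrest⟩ := hof
    refine ⟨fun hcp => hCW (hc hcp), fun hcp hmW => hnc hcp (hyp m (Or.inl rfl) hmW), ?_⟩
    cases w₂ with
    | nil => trivial
    | @cons m₂' m₃ c' e₃ h₃ w₃ =>
      refine ih e₂ hrest (fun u hu huW => hyp u ?_ huW)
      rcases hu with rfl | hu
      · exact Or.inr (by rw [intSup_cons_cons]; simp)
      · exact Or.inr (by rw [intSup_cons_cons]; exact List.mem_cons_of_mem _ hu)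

lemma lift {C W : Set V} {a b : V} (w : K.Walk a b) (h : w.IsOpen C) (hCW : C ⊆ W)
    (hyp : ∀ u ∈ w.intSup, u ∈ W → u ∈ C) : w.IsOpen W := by
  cases w with
  | nil v => trivial
  | @cons a m b e h₁ w₁ =>
    rw [isOpen_cons] at h ⊢
    cases w₁ with
    | nil => trivial
    | @cons m m₂ b e₂ h₂ w₂ =>
      refine lift_aux hCW _ e h (fun u hu huW => hyp u ?_ huW)
      rcases hu with rfl | hu
      · rw [intSup_cons_cons]; simp
      · rw [intSup_cons_cons]; exact List.mem_cons_of_mem _ hu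

lemma pref_aux {C : Set V} :
    ∀ {b c : V} (w : K.Walk b c) (e₁ : EdgeDir), openFrom C e₁ b w →
      ∀ v ∈ w.support, ∃ (w' : K.Walk b v), openFrom C e₁ b w' ∧
        ∀ {a₀ : V} (e₀ : EdgeDir) (h₀ : K.IsEdge e₀ a₀ b), v ∉ (Walk.cons e₀ h₀ w').intSup := by
  intro b c w
  induction w with
  | nil u =>
    intro e₁ _ v hv
    simp only [support_nil, List.mem_singleton] at hv
    subst hv
    exact ⟨Walk.nil v, trivial, fun e₀ h₀ => by simp⟩
  | @cons b m c e₂ h₂ w₂ ih =>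
    intro e₁ hof v hv
    by_cases hvb : v = b
    · subst hvb
      exact ⟨Walk.nil v, trivial, fun e₀ h₀ => by simp⟩
    · rw [openFrom_cons] at hof
      obtain ⟨hc, hnc, hrest⟩ := hof
      rw [support_cons] at hv
      have hv₂ : v ∈ w₂.support := by
        rcases List.mem_cons.mp hv with rfl | hv'
        · exact absurd rfl hvb
        · exact hv'
      obtain ⟨w₂', hof₂, hcl₂⟩ := ih e₂ hrest v hv₂
      refine ⟨Walk.cons e₂ h₂ w₂', ?_, ?_⟩
      · rw [openFrom_cons]; exact ⟨hc, hnc, hof₂⟩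
      · intro a₀ e₀ h₀
        rw [intSup_cons_cons]
        intro hmem
        rcases List.mem_cons.mp hmem with rfl | hmem'
        · exact hvb rfl
        · exact hcl₂ e₂ h₂ hmem'

lemma pref {C : Set V} {a b : V} (w : K.Walk a b) (h : w.IsOpen C) (v : V)
    (hv : v ∈ w.support) (hva : v ≠ a) :
    ∃ (w' : K.Walk a v), w'.IsOpen C ∧ v ∉ w'.intSup := by
  cases w with
  | nil u =>
    simp only [support_nil, List.mem_singleton] at hv
    exact absurd hv hva
  | @cons a m b e h₁ w₁ =>
    rw [isOpen_cons] at h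
    rw [support_cons] at hv
    have hv₁ : v ∈ w₁.support := by
      rcases List.mem_cons.mp hv with rfl | hv'
      · exact absurd rfl hva
      · exact hv'
    obtain ⟨w₁', hof₁, hcl₁⟩ := pref_aux w₁ e h v hv₁
    exact ⟨Walk.cons e h₁ w₁', hof₁, hcl₁ e h₁⟩

lemma suff2 {C : Set V} :
    ∀ {m b : V} (w : K.Walk m b), w.IsOpen C → ∀ v ∈ w.intSup,
      ∃ (w' : K.Walk v b), w'.IsOpen C ∧ (∀ u ∈ w'.intSup, u ∈ w.intSup) ∧
        (w.lastArrowIn → w'.lastArrowIn) ∧ w'.support.length < w.support.length := by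
  intro m b w
  induction w with
  | nil u => intro _ v hv; simp at hv
  | @cons m m₂ b e h₂ w₂ ih =>
    intro hop v hv
    cases w₂ with
    | nil => simp at hv
    | @cons m₂' m₃ b' e₂ h₃ w₃ =>
      rw [isOpen_cons, openFrom_cons] at hop
      obtain ⟨hc, hnc, hrest⟩ := hop
      have hop₂ : (Walk.cons e₂ h₃ w₃).IsOpen C := hrest
      rw [intSup_cons_cons] at hv
      rcases List.mem_cons.mp hv with rfl | hv'
      · refine ⟨Walk.cons e₂ h₃ w₃, hop₂, ?_, fun hla => hla, ?_⟩
        · intro u hu; rw [intSup_cons_cons]; exact List.mem_cons_of_mem _ hu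
        · simp
      · obtain ⟨w', h1, h2, h3, h4⟩ := ih hop₂ v hv'
        refine ⟨w', h1, ?_, fun hla => h3 hla, ?_⟩
        · intro u hu
          rw [intSup_cons_cons]
          exact List.mem_cons_of_mem _ (h2 u hu)
        · calc w'.support.length < (Walk.cons e₂ h₃ w₃).support.length := h4
            _ < (Walk.cons e h₂ (Walk.cons e₂ h₃ w₃)).support.length := by simp

lemma truncx {C : Set V} :
    ∀ (n : ℕ) {a b : V} (w : K.Walk a b), w.support.length ≤ n → w.IsOpen C →
      ∃ (w' : K.Walk a b), w'.IsOpen C ∧ a ∉ w'.intSup ∧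
        (w.lastArrowIn → w'.lastArrowIn) := by
  intro n
  induction n with
  | zero =>
    intro a b w hn _
    have := support_ne_nil w
    cases hs : w.support with
    | nil => exact absurd hs this
    | cons u l => rw [hs] at hn; simp at hn
  | succ n ih =>
    intro a b w hn hop
    by_cases ha : a ∈ w.intSup
    · obtain ⟨w'', h1, h2, h3, h4⟩ := suff2 w hop a ha
      obtain ⟨w', g1, g2, g3⟩ := ih w'' (by omega) h1
      exact ⟨w', g1, g2, fun hla => g3 (h3 hla)⟩
    · exact ⟨w, hop, ha, fun hla => hla⟩

/-- Concatenation of walks. -/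
def append : {a b c : V} → K.Walk a b → K.Walk b c → K.Walk a c
  | _, _, _, .nil _, w₂ => w₂
  | _, _, _, .cons e h w, w₂ => .cons e h (w.append w₂)

@[simp] lemma append_nil_left {b c : V} (w₂ : K.Walk b c) :
    (Walk.nil b : K.Walk b b).append w₂ = w₂ := rfl

@[simp] lemma append_cons {a m b c : V} (e : EdgeDir) (h : K.IsEdge e a m)
    (w : K.Walk m b) (w₂ : K.Walk b c) :
    (Walk.cons e h w).append w₂ = Walk.cons e h (w.append w₂) := rfl

lemma append_openFrom {C : Set V} :
    ∀ {m b c : V} (w₁ : K.Walk m b) (e₁ : EdgeDir) (w₂ : K.Walk b c),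
      openFrom C e₁ m w₁ → w₂.IsOpen C → (w₁.lastD e₁).arrowSnd → w₂.firstArrowIn →
      b ∈ C → openFrom C e₁ m (w₁.append w₂) := by
  intro m b c w₁
  induction w₁ with
  | nil u =>
    intro e₁ w₂ _ hop₂ hsnd hfst hbC
    rw [append_nil_left]
    cases w₂ with
    | nil => trivial
    | @cons u m₂ c e' h' w₂' =>
      rw [openFrom_cons]
      have hfst' : e'.arrowFst := hfst
      have hsnd' : e₁.arrowSnd := hsnd
      exact ⟨fun _ => hbC, fun hn => absurd ⟨hsnd', hfst'⟩ hn, hop₂⟩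
  | @cons m m' b e₂ h₂ w₃ ih =>
    intro e₁ w₂ hof hop₂ hsnd hfst hbC
    rw [openFrom_cons] at hof
    obtain ⟨hc, hnc, hrest⟩ := hof
    rw [append_cons, openFrom_cons]
    exact ⟨hc, hnc, ih e₂ w₂ hrest hop₂ hsnd hfst hbC⟩

lemma append_isOpen {C : Set V} {a b c : V} (w₁ : K.Walk a b) (w₂ : K.Walk b c)
    (h₁ : w₁.IsOpen C) (h₂ : w₂.IsOpen C) (hla : w₁.lastArrowIn)
    (hfa : w₂.firstArrowIn) (hbC : b ∈ C) : (w₁.append w₂).IsOpen C := by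
  cases w₁ with
  | nil u => exact h₂
  | @cons a m b e h w₃ =>
    rw [isOpen_cons] at h₁
    rw [lastArrowIn_eq] at hla
    rw [append_cons, isOpen_cons]
    exact append_openFrom w₃ e w₂ h₁ h₂ hla hfa hbC

lemma append_lastArrowIn :
    ∀ {a b c : V} (w₁ : K.Walk a b) (w₂ : K.Walk b c), w₂.lastArrowIn →
      (w₁.append w₂).lastArrowIn := by
  intro a b c w₁
  induction w₁ with
  | nil u => intro w₂ h; exact h
  | @cons a m b e h w₃ ih =>
    intro w₂ hla
    rw [append_cons]
    have hX := ih w₂ hla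
    rw [lastArrowIn_eq]
    cases hE : w₃.append w₂ with
    | nil =>
      rw [hE] at hX
      exact absurd hX (lastArrowIn_nil _)
    | cons e' h' w' =>
      rw [hE] at hX
      rw [lastArrowIn_eq] at hX
      show (((Walk.cons e' h' w').lastD e)).arrowSnd
      exact hX

end Walk

end MixedGraph
namespace MixedGraph

variable {V : Type} {K : MixedGraph V}

namespace Walk

@[simp] lemma firstArrowIn_cons {a m b : V} (e : EdgeDir) (h : K.IsEdge e a m)
    (w : K.Walk m b) : (Walk.cons e h w).firstArrowIn = e.arrowFst := rfl

@[simp] lemma headE_cons {a m b : V} (e : EdgeDir) (h : K.IsEdge e a m)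
    (w : K.Walk m b) : (Walk.cons e h w).headE = some e := rfl

/-- Extraction of a violating collider. -/
lemma ext_viol {C W : Set V} (hCW : C ⊆ W) :
    ∀ {a t : V} (ρ : K.Walk a t), ρ.IsOpen W → ¬ ρ.IsOpen C →
      ∃ (c : V) (ρ₁ : K.Walk a c) (ρ₂ : K.Walk c t),
        c ∈ W ∧ c ∉ C ∧ ρ₁.IsOpen W ∧ ρ₁.lastArrowIn ∧ ρ₁.headE = ρ.headE ∧
        ρ₂.IsOpen W ∧ ρ₂.firstArrowIn ∧ (ρ.lastArrowIn → ρ₂.lastArrowIn) ∧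
        ρ₁.support.length < ρ.support.length ∧
        (∀ v ∈ ρ₁.intSup, v ∈ ρ.intSup) ∧
        (∀ v ∈ ρ₂.support, v ∈ ρ.intSup ∨ v = t) := by
  intro a t ρ
  induction ρ with
  | nil u => intro _ hC; exact absurd trivial hC
  | @cons a m t e h ρ' ih =>
    intro hW hC
    cases ρ' with
    | nil => exact absurd trivial hC
    | @cons m m₂ t e₂ h₂ ρ'' =>
      rw [isOpen_cons, openFrom_cons] at hW hC
      obtain ⟨hw1, hw2, hwrest⟩ := hW
      by_cases hrest : openFrom C e₂ m₂ ρ''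
      · -- the violation is at `m`
        by_cases hcp : IsColliderPair e e₂
        · by_cases hmC : m ∈ C
          · exact absurd ⟨fun _ => hmC, fun hn => absurd hcp hn, hrest⟩ hC
          · refine ⟨m, Walk.cons e h (Walk.nil m), Walk.cons e₂ h₂ ρ'',
              hw1 hcp, hmC, trivial, ?_, rfl, hwrest, hcp.2, fun hla => hla, ?_, ?_, ?_⟩
            · rw [lastArrowIn_eq]; exact hcp.1
            · have hpos : 0 < ρ''.support.length := List.length_pos_iff.mpr (support_ne_nil ρ'')
              simp only [support_cons, support_nil, List.length_cons, List.length_singleton, List.length_nil]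
              omega
            · intro v hv; simp at hv
            · intro v hv
              rcases mem_support_decomp _ v hv with rfl | rfl | hv'
              · rw [intSup_cons_cons]; exact Or.inl (by simp)
              · exact Or.inr rfl
              · rw [intSup_cons_cons]; exact Or.inl (List.mem_cons_of_mem _ hv')
        · have hmW : m ∉ W := hw2 hcp
          have hmC : m ∉ C := fun hc => hmW (hCW hc)
          exact absurd ⟨fun hcp' => absurd hcp' hcp, fun _ => hmC, hrest⟩ hC
      · -- recurse into the tail
        have hC' : ¬ (Walk.cons e₂ h₂ ρ'').IsOpen C := by
          rw [isOpen_cons]; exact hrest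
        have hW' : (Walk.cons e₂ h₂ ρ'').IsOpen W := hwrest
        obtain ⟨c, ρ₁', ρ₂', hcW, hcC, ho1, hla1, hhd1, ho2, hfa2, hlat2, hlen, hint1, hint2⟩ :=
          ih hW' hC'
        cases ρ₁' with
        | nil => simp [headE] at hhd1
        | @cons m m₂' c' e' h' w' =>
          rw [headE_cons, headE_cons] at hhd1
          have he' : e' = e₂ := by injection hhd1
          subst he'
          refine ⟨c, Walk.cons e h (Walk.cons e' h' w'), ρ₂', hcW, hcC, ?_, ?_, rfl,
            ho2, hfa2, fun hla => hlat2 hla, ?_, ?_, ?_⟩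
          · rw [isOpen_cons, openFrom_cons]
            exact ⟨hw1, hw2, by rw [isOpen_cons] at ho1; exact ho1⟩
          · exact hla1
          · rw [isOpen_cons] at ho1
            simp only [support_cons, List.length_cons] at hlen ⊢
            omega
          · intro v hv
            rw [intSup_cons_cons] at hv ⊢
            rcases List.mem_cons.mp hv with rfl | hv'
            · exact List.mem_cons_self
            · exact List.mem_cons_of_mem _ (hint1 v hv')
          · intro v hv
            rcases hint2 v hv with hv' | rfl
            · rw [intSup_cons_cons]
              exact Or.inl (List.mem_cons_of_mem _ hv')
            · exact Or.inr rfl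

end Walk

variable {G : MixedGraph V} {x y : V}

lemma tilde_acyclic (hG : G.IsADMG) (x y : V) :
    ∀ v, ¬ Relation.TransGen (G.tilde x y).dir v v := by
  intro v hv
  exact hG.2 v (Relation.TransGen.mono (fun a b (hab : (G.tilde x y).dir a b) => hab.1) v v hv)

lemma toTilde_edge (e : EdgeDir) (a b : V) (h : G.IsEdge e a b) (ha : a ≠ x) (hb : b ≠ x) :
    (G.tilde x y).IsEdge e a b := by
  cases e with
  | fwd => exact ⟨h, fun hc => ha hc.1⟩
  | back => exact ⟨h, fun hc => hb hc.1⟩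
  | bi => exact h

namespace Walk

lemma conv_aux :
    ∀ {m c : V} (w : G.Walk m c), (∀ v ∈ w.support, v ≠ x) →
      ∃ (w' : (G.tilde x y).Walk m c),
        (∀ (Cs : Set V) (e₁ : EdgeDir), openFrom Cs e₁ m w → openFrom Cs e₁ m w') ∧
        (∀ d, w.lastD d = w'.lastD d) := by
  intro m c w
  induction w with
  | nil u => exact fun _ => ⟨Walk.nil u, fun _ _ _ => trivial, fun d => rfl⟩
  | @cons m m₃ c e₂ h₂ w₃ ih =>
    intro hx
    have hm : m ≠ x := hx m (start_mem_support _)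
    have hm₃ : m₃ ≠ x := hx m₃ (by rw [support_cons]; exact List.mem_cons_of_mem _ (start_mem_support w₃))
    obtain ⟨w₃', htrans, hlast⟩ := ih (fun v hv => hx v (by rw [support_cons]; exact List.mem_cons_of_mem _ hv))
    refine ⟨Walk.cons e₂ (toTilde_edge (y := y) e₂ m m₃ h₂ hm hm₃) w₃', ?_, ?_⟩
    · intro Cs e₁ hof
      rw [openFrom_cons] at hof ⊢
      exact ⟨hof.1, hof.2.1, htrans Cs e₂ hof.2.2⟩
    · intro d
      show w₃.lastD e₂ = w₃'.lastD e₂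
      exact hlast e₂

lemma conv {a b : V} (w : G.Walk a b) (hx : ∀ v ∈ w.support, v ≠ x) :
    ∃ (w' : (G.tilde x y).Walk a b),
      (∀ (Cs : Set V), w.IsOpen Cs → w'.IsOpen Cs) ∧
      (w.lastArrowIn → w'.lastArrowIn) ∧ (w.firstArrowIn → w'.firstArrowIn) := by
  cases w with
  | nil =>
    exact ⟨Walk.nil _, fun _ _ => trivial, fun h => absurd h (lastArrowIn_nil _),
      fun h => h.elim⟩
  | @cons a m b e h w₂ =>
    have ha : a ≠ x := hx a (start_mem_support _)
    have hm : m ≠ x := hx m (by rw [support_cons]; exact List.mem_cons_of_mem _ (start_mem_support w₂))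
    obtain ⟨w₂', htrans, hlast⟩ := conv_aux (y := y) w₂
      (fun v hv => hx v (by rw [support_cons]; exact List.mem_cons_of_mem _ hv))
    refine ⟨Walk.cons e (toTilde_edge (y := y) e a m h ha hm) w₂', ?_, ?_, ?_⟩
    · intro Cs hop
      rw [isOpen_cons] at hop ⊢
      exact htrans Cs e hop
    · intro hla
      rw [lastArrowIn_eq] at hla ⊢
      rw [← hlast e]
      exact hla
    · intro hfa
      exact hfa

end Walk

end MixedGraph
namespace MixedGraph

variable {V : Type}

open Walk in
/-- The separation step: after shrinking the conditioning set to the ancestral part,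
`y` and `t` are still separated. -/
lemma sep_lemma {K : MixedGraph V} (hK : ∀ u, ¬ Relation.TransGen K.dir u u)
    (y t : V) (W : Set V) (hyt : y ≠ t)
    (h1 : ∀ (τ : K.Walk y t), τ.IsOpen W → τ.lastArrowIn → False)
    (h2 : (∀ (τ : K.Walk y t), τ.IsOpen W → False) ∨ t ∉ K.anc {y}) :
    ∀ (τ : K.Walk y t), τ.IsOpen ((W ∩ K.anc {y, t}) \ {t}) → False := by
  intro τ hτ
  set C := (W ∩ K.anc {y, t}) \ {t} with hCdef
  have hCanc : C ⊆ K.anc {y, t} := fun u hu => hu.1.2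
  have hCW : C ⊆ W := fun u hu => hu.1.1
  obtain ⟨τ', hop', hnint⟩ := pref τ hτ t (end_mem_support τ) (fun h => hyt h.symm)
  have hanc : ∀ v ∈ τ'.support, v ∈ K.anc {y, t} := by
    intro v hv
    exact anc_absorb hCanc (isOpen_anc hK τ' hop' v hv)
  have hlift : τ'.IsOpen W := by
    refine lift τ' hop' hCW ?_
    intro u hu huW
    refine ⟨⟨huW, hanc u (mem_support_of_mem_intSup hu)⟩, ?_⟩
    intro hut
    have : u = t := hut
    exact hnint (this ▸ hu)
  rcases h2 with h2 | h2
  · exact h2 τ' hlift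
  · by_cases hla : τ'.lastArrowIn
    · exact h1 τ' hlift hla
    · cases τ' with
      | nil => exact hyt rfl
      | @cons y m t e h w =>
        obtain ⟨p, hp, hdir⟩ := pen e h w hla
        obtain ⟨s, hs, hps⟩ := hanc p hp
        have hs' : s = y ∨ s = t := by simpa using hs
        rcases hs' with rfl | rfl
        · exact h2 (anc_step hdir ⟨s, rfl, hps⟩)
        · exact no_cycle_of_acyclic hK hdir ⟨s, rfl, hps⟩

open Walk in
lemma main_ind (G : MixedGraph V) (hG : G.IsADMG) (x y z : V) (W : Set V)
    (hxy : x ≠ y) (hxz : x ≠ z) (hyz : y ≠ z) (hxW : x ∉ W) (hyW : y ∉ W) (hzW : z ∉ W)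
    (hforb : (({z} : Set V) ∪ W) ∩ G.forb x y = ∅)
    (hsep : ¬ (G.tilde x y).dConn {y} {z} W) :
    ∀ (n : ℕ) (t : V) (ρ : G.Walk x t), ρ.support.length ≤ n → ρ.IsOpen W →
      x ∉ ρ.intSup →
      (t = z ∨ (t ∈ W ∧
        (∀ (τ : (G.tilde x y).Walk y t), τ.IsOpen W → τ.lastArrowIn → False) ∧
        t ∉ (G.tilde x y).anc {y} ∧ ρ.lastArrowIn)) →
      ∃ (z' : V) (W' : Set V), W' ⊆ (G.tilde x y).anc {y, z'} ∧ G.ValidCIS x y {z'} W' := by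
  have hK : ∀ u, ¬ Relation.TransGen (G.tilde x y).dir u u := tilde_acyclic hG x y
  have hforb' : ∀ u, u ∈ (({z} : Set V) ∪ W) → u ∈ G.forb x y → False := by
    intro u h1 h2
    rw [Set.eq_empty_iff_forall_notMem] at hforb
    exact hforb u ⟨h1, h2⟩
  intro n
  induction n with
  | zero =>
    intro t ρ hn
    have := List.length_pos_iff.mpr (support_ne_nil ρ)
    omega
  | succ n ih =>
    intro t ρ hn hρW hxint hΦ
    set C := (W ∩ (G.tilde x y).anc {y, t}) \ {t} with hCdef
    have hCW : C ⊆ W := fun u hu => hu.1.1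
    have hCanc : C ⊆ (G.tilde x y).anc {y, t} := fun u hu => hu.1.2
    have hyt : y ≠ t := by
      rcases hΦ with rfl | ⟨htW, _, _, _⟩
      · exact hyz
      · exact fun h => hyW (h ▸ htW)
    have hxt : x ≠ t := by
      rcases hΦ with rfl | ⟨htW, _, _, _⟩
      · exact hxz
      · exact fun h => hxW (h ▸ htW)
    have htzW : t ∈ (({z} : Set V) ∪ W) := by
      rcases hΦ with rfl | ⟨htW, _, _, _⟩
      · exact Or.inl rfl
      · exact Or.inr htW
    have hSEP : ∀ (τ : (G.tilde x y).Walk y t), τ.IsOpen C → False := by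
      apply sep_lemma hK y t W hyt
      · rcases hΦ with rfl | ⟨_, hNT, _, _⟩
        · exact fun τ ho _ => hsep ⟨y, rfl, t, rfl, τ, ho⟩
        · exact hNT
      · rcases hΦ with rfl | ⟨_, _, hanc, _⟩
        · exact Or.inl (fun τ ho => hsep ⟨y, rfl, t, rfl, τ, ho⟩)
        · exact Or.inr hanc
    by_cases hopen : ρ.IsOpen C
    · refine ⟨t, C, fun u hu => hu.1.2, hxy, fun h => hxt h, fun hc => hxW (hCW hc),
        fun h => hyt (h : y = t), fun hc => hyW (hCW hc),
        Set.disjoint_singleton_left.mpr (fun hc => hc.2 rfl), ?_, ?_, ?_⟩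
      · rw [Set.eq_empty_iff_forall_notMem]
        rintro u ⟨hu1, hu2⟩
        rcases hu1 with hu1 | hu1
        · have : u = t := hu1
          exact hforb' u (this ▸ htzW) hu2
        · exact hforb' u (Or.inr (hCW hu1)) hu2
      · exact ⟨x, rfl, t, rfl, ρ, hopen⟩
      · rintro ⟨y', hy', t', ht', τ, hτ⟩
        have hy'' : y' = y := hy'
        have ht'' : t' = t := ht'
        subst hy''; subst ht''
        exact hSEP τ hτ
    · obtain ⟨c, ρ₁, ρ₂, hcW, hcC, ho1, hla1, _, ho2, hfa2, hlat2, hlen, hint1, hint2⟩ :=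
        ext_viol hCW ρ hρW hopen
      have hcx : c ≠ x := fun h => hxW (h ▸ hcW)
      have hcanc : c ∉ (G.tilde x y).anc {y} := by
        by_cases hct : c = t
        · subst hct
          rcases hΦ with rfl | ⟨_, _, hanc, _⟩
          · exact absurd hcW hzW
          · exact hanc
        · have hcna : c ∉ (G.tilde x y).anc {y, t} :=
            fun h => hcC ⟨⟨hcW, h⟩, fun h' => hct h'⟩
          exact fun h => hcna (anc_mono (by simp) h)
      have hNTc : ∀ (τc : (G.tilde x y).Walk y c), τc.IsOpen W → τc.lastArrowIn → False := by
        intro τc hoc hlac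
        have hρ₂x : ∀ v ∈ ρ₂.support, v ≠ x := by
          intro v hv
          rcases hint2 v hv with hv' | rfl
          · exact fun h => hxint (h ▸ hv')
          · exact fun h => hxt h.symm
        obtain ⟨ρ₂', htrans, hlat', hfat'⟩ := conv (x := x) (y := y) ρ₂ hρ₂x
        have hκ : ((τc.append ρ₂')).IsOpen W :=
          append_isOpen τc ρ₂' hoc (htrans W ho2) hlac (hfat' hfa2) hcW
        rcases hΦ with rfl | ⟨_, hNT, _, hρla⟩
        · exact hsep ⟨y, rfl, t, rfl, τc.append ρ₂', hκ⟩
        · exact hNT (τc.append ρ₂') hκ (append_lastArrowIn τc ρ₂' (hlat' (hlat2 hρla)))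
      exact ih c ρ₁ (by omega) ho1 (fun h => hxint (hint1 x h))
        (Or.inr ⟨hcW, hNTc, hcanc, hla1⟩)

end MixedGraph
/-- Let `x` and `y` be distinct nodes in an ADMG `G`. There exist a node
`z` and a set `W` such that `({z},W)` is a valid conditional instrumental set relative to
`(x,y)` in `G` if and only if there exist a node `z'` and a set `W' ⊆ an_G̃({y, z'})`
such that `({z'},W')` is a valid conditional instrumental set relative to `(x,y)` in `G`. -/
theorem exists_valid_cis_iff_exists_ancestral_valid_cis {V : Type} (G : MixedGraph V)
    (hG : G.IsADMG) (x y : V) (hxy : x ≠ y) :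
    (∃ (z : V) (W : Set V), G.ValidCIS x y {z} W) ↔
      ∃ (z' : V) (W' : Set V), W' ⊆ (G.tilde x y).anc {y, z'} ∧ G.ValidCIS x y {z'} W' := by
  constructor
  · rintro ⟨z, W, hv⟩
    obtain ⟨hxy', hxZ, hxW, hyZ, hyW, hdisj, hforb, hconn, hsep⟩ := hv
    have hxz : x ≠ z := fun h => hxZ h
    have hyz : y ≠ z := fun h => hyZ h
    have hzW : z ∉ W := Set.disjoint_singleton_left.mp hdisj
    obtain ⟨x', hx', z', hz', π, hπ⟩ := hconn
    have hx'' : x = x' := (hx' : x' = x).symm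
    have hz'' : z = z' := (hz' : z' = z).symm
    subst hx''; subst hz''
    obtain ⟨π₂, hπ₂, hxint, _⟩ :=
      MixedGraph.Walk.truncx (C := W) π.support.length π le_rfl hπ
    exact MixedGraph.main_ind G hG x y z W hxy hxz hyz hxW hyW hzW hforb hsep
      π₂.support.length z π₂ le_rfl hπ₂ hxint (Or.inl rfl)
  · rintro ⟨z', W', _, hv⟩
    exact ⟨z', W', hv⟩
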